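/- arXiv:2403.09071 — 2 statements merged into one kernel-verified Lean document; each statement's English description precedes it below -/
import Mathlib

section
/- For every δ > 0 there exists C > 0 such that K₁(x,y) ≤ C for all x, y ∈ ℝ² with |x − y| ≥ δ. -/
open MeasureTheory Real intervalIntegral

set_option maxHeartbeats 1000000

/-- Euclidean norm on `ℝ²`. -/
noncomputable def vnorm (x : ℝ × ℝ) : ℝ := Real.sqrt (x.1 ^ 2 + x.2 ^ 2)

/-- Rotation `R_a` on `ℝ²`. -/
noncomputable def vrot (a : ℝ) (x : ℝ × ℝ) : ℝ × ℝ :=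
  (x.1 * Real.cos a + x.2 * Real.sin a, -x.1 * Real.sin a + x.2 * Real.cos a)

/-- Japanese bracket `⟨x⟩ = √(1+|x|²)` on `ℝ²`. -/
noncomputable def jap (x : ℝ × ℝ) : ℝ := Real.sqrt (1 + x.1 ^ 2 + x.2 ^ 2)

/-- The kernel `K₁` appearing in the energy of the helical Euler equation. -/
noncomputable def K1 (x y : ℝ × ℝ) : ℝ :=
  (1 / (4 * π)) * ∫ a in (-π)..π, ∫ b in (-π)..π,
    1 / Real.sqrt (vnorm (vrot a x - vrot b y) ^ 2 + (a - b) ^ 2)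

lemma vnorm_sq (v : ℝ × ℝ) : vnorm v ^ 2 = v.1 ^ 2 + v.2 ^ 2 := by
  rw [vnorm, Real.sq_sqrt (by positivity)]

lemma vrot_zero (y : ℝ × ℝ) : vrot 0 y = y := by
  simp [vrot]

lemma vrot_vrot (a c : ℝ) (y : ℝ × ℝ) : vrot a (vrot c y) = vrot (a + c) y := by
  simp only [vrot, Real.cos_add, Real.sin_add, Prod.mk.injEq]
  constructor <;> ring

lemma vrot_sub (a : ℝ) (u v : ℝ × ℝ) : vrot a (u - v) = vrot a u - vrot a v := by
  simp only [vrot, Prod.fst_sub, Prod.snd_sub, Prod.mk_sub_mk, Prod.mk.injEq]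
  constructor <;> ring

lemma vnorm_vrot (a : ℝ) (v : ℝ × ℝ) : vnorm (vrot a v) = vnorm v := by
  unfold vnorm
  congr 1
  simp only [vrot]
  linear_combination (v.1 ^ 2 + v.2 ^ 2) * Real.sin_sq_add_cos_sq a

lemma rot_shift (x y : ℝ × ℝ) (a b : ℝ) :
    vnorm (vrot a x - vrot b y) = vnorm (x - vrot (b - a) y) := by
  have h : vrot a (x - vrot (b - a) y) = vrot a x - vrot b y := by
    rw [vrot_sub, vrot_vrot]
    norm_num
  rw [← h, vnorm_vrot]

lemma exists_polar (x y : ℝ × ℝ) :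
    ∃ R ψ : ℝ, 0 ≤ R ∧ |ψ| ≤ π ∧
      R ^ 2 = (x.1 ^ 2 + x.2 ^ 2) * (y.1 ^ 2 + y.2 ^ 2) ∧
      ∀ t : ℝ, vnorm (x - vrot t y) ^ 2 + t ^ 2
        = ((x.1 ^ 2 + x.2 ^ 2) + (y.1 ^ 2 + y.2 ^ 2) - 2 * R)
          + 2 * R * (1 - Real.cos (t - ψ)) + t ^ 2 := by
  set P : ℝ := x.1 * y.1 + x.2 * y.2 with hPdef
  set Q : ℝ := x.1 * y.2 - x.2 * y.1 with hQdef
  set z : ℂ := ⟨P, Q⟩ with hzdef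
  have hre : z.re = P := rfl
  have him : z.im = Q := rfl
  have hP : P = ‖z‖ * Real.cos (Complex.arg z) := by
    rcases eq_or_ne z 0 with h0 | h0
    · have : P = 0 := by rw [← hre, h0]; rfl
      rw [this, h0]; simp
    · rw [Complex.cos_arg h0, hre]
      rw [mul_div_cancel₀ _ ((norm_ne_zero_iff.mpr h0))]
  have hQ : Q = ‖z‖ * Real.sin (Complex.arg z) := by
    rcases eq_or_ne z 0 with h0 | h0
    · have : Q = 0 := by rw [← him, h0]; rfl
      rw [this, h0]; simp
    · rw [Complex.sin_arg, him]
      rw [mul_div_cancel₀ _ ((norm_ne_zero_iff.mpr h0))]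
  refine ⟨‖z‖, Complex.arg z, norm_nonneg z, Complex.abs_arg_le_pi z, ?_, ?_⟩
  · rw [Complex.sq_norm, Complex.normSq_apply, hre, him, hPdef, hQdef]; ring
  · intro t
    rw [vnorm_sq, Real.cos_sub]
    simp only [vrot, Prod.fst_sub, Prod.snd_sub]
    linear_combination (y.1 ^ 2 + y.2 ^ 2) * Real.sin_sq_add_cos_sq t
      - (2 * Real.cos t) * hP - (2 * Real.sin t) * hQ

set_option maxHeartbeats 1000000 in
lemma key_bound {δ : ℝ} (hδ : 0 < δ) (x y : ℝ × ℝ) (hxy : δ ≤ vnorm (x - y)) :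
    (∫ t in (-(2 * π))..(2 * π), 1 / Real.sqrt (vnorm (x - vrot t y) ^ 2 + t ^ 2))
      ≤ (4 / δ + 1) * (4 * π) + 2 := by
  obtain ⟨R, ψ, hR0, hψπ, hR2, hg⟩ := exists_polar x y
  set g : ℝ → ℝ := fun t => vnorm (x - vrot t y) ^ 2 + t ^ 2 with hgdef
  have hπ : (0:ℝ) < π := Real.pi_pos
  have hr20 : (0:ℝ) ≤ x.1 ^ 2 + x.2 ^ 2 := by positivity
  have hs20 : (0:ℝ) ≤ y.1 ^ 2 + y.2 ^ 2 := by positivity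
  have h2R : 2 * R ≤ (x.1 ^ 2 + x.2 ^ 2) + (y.1 ^ 2 + y.2 ^ 2) := by
    nlinarith [sq_nonneg ((x.1 ^ 2 + x.2 ^ 2) - (y.1 ^ 2 + y.2 ^ 2))]
  set m2 : ℝ := (x.1 ^ 2 + x.2 ^ 2) + (y.1 ^ 2 + y.2 ^ 2) - 2 * R with hm2def
  have hg' : ∀ t : ℝ, g t = m2 + 2 * R * (1 - Real.cos (t - ψ)) + t ^ 2 := fun t => hg t
  have hm0 : 0 ≤ m2 := by simp only [hm2def]; linarith
  have hg0 : δ ^ 2 ≤ g 0 := by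
    have : g 0 = vnorm (x - y) ^ 2 := by simp [hgdef, vrot_zero]
    rw [this]
    exact pow_le_pow_left₀ hδ.le hxy 2
  clear_value g m2
  clear hg hm2def
  have hΔ : δ ^ 2 ≤ m2 + 2 * R * (1 - Real.cos ψ) := by
    have h2 := hg' 0
    rw [zero_sub, Real.cos_neg] at h2
    nlinarith [h2, hg0]
  have hgt2 : ∀ t, t ^ 2 ≤ g t := fun t => by
    have h2 := hg' t
    nlinarith [Real.cos_le_one (t - ψ)]
  have hgpos : ∀ t, 0 < g t := by
    intro t
    rcases eq_or_ne t 0 with rfl | ht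
    · nlinarith [hg0]
    · have h1 : 0 < t ^ 2 := by positivity
      linarith [hgt2 t]
  have hgc : Continuous g := by
    have hgeq : g = fun t => m2 + 2 * R * (1 - Real.cos (t - ψ)) + t ^ 2 := funext fun t => hg' t
    rw [hgeq]; fun_prop
  set h : ℝ → ℝ := fun t => 1 / Real.sqrt (g t) with hhdef
  have hhc : Continuous h := by
    apply continuous_const.div (Real.continuous_sqrt.comp hgc)
    exact fun t => (Real.sqrt_pos.2 (hgpos t)).ne'
  have hh0 : ∀ t, 0 ≤ h t := fun t => by positivity
  have hbnd : ∀ (t : ℝ) (c : ℝ), 0 < c → c ≤ g t → h t ≤ 1 / Real.sqrt c := fun t c hc hle =>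
    one_div_le_one_div_of_le (Real.sqrt_pos.2 hc) (Real.sqrt_le_sqrt hle)
  set B : Set ℝ := Set.Ioo (min (ψ / 2) (3 * ψ / 2)) (max (ψ / 2) (3 * ψ / 2)) with hBdef
  have hBmem : ∀ t : ℝ, t ∈ B ↔ |t - ψ| < |ψ| / 2 := by
    intro t
    rcases le_total 0 ψ with hs | hs
    · rw [hBdef, min_eq_left (by linarith), max_eq_right (by linarith), Set.mem_Ioo,
        abs_of_nonneg hs, abs_lt]
      constructor <;> rintro ⟨h1, h2⟩ <;> constructor <;> linarith
    · rw [hBdef, min_eq_right (by linarith), max_eq_left (by linarith), Set.mem_Ioo,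
        abs_of_nonpos hs, abs_lt]
      constructor <;> rintro ⟨h1, h2⟩ <;> constructor <;> linarith
  have hB : ∀ t ∈ B, h t ≤ 2 / |ψ| := by
    intro t ht
    rw [hBmem t] at ht
    have hψ0 : 0 < |ψ| := by
      by_contra hcon
      push_neg at hcon
      linarith [abs_nonneg (t - ψ)]
    have htl : |ψ| / 2 < |t| := by
      have h1 : |t - (t - ψ)| ≤ |t| + |t - ψ| := abs_sub t (t - ψ)
      rw [sub_sub_cancel] at h1
      linarith
    have hc : (|ψ| / 2) ^ 2 ≤ g t := by
      have h1 : (|ψ| / 2) ^ 2 ≤ t ^ 2 := by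
        rw [← sq_abs t]
        exact pow_le_pow_left₀ (by positivity) htl.le 2
      linarith [hgt2 t]
    have h2 := hbnd t ((|ψ| / 2) ^ 2) (by positivity) hc
    rwa [Real.sqrt_sq (by positivity), one_div_div] at h2
  have hA : ∀ t ∈ Set.Ioc (-(2 * π)) (2 * π) \ B, h t ≤ 4 / δ + 1 := by
    rintro t ⟨htS, htB⟩
    have hut : |ψ| / 2 ≤ |t - ψ| := le_of_not_gt (fun hc => htB ((hBmem t).2 hc))
    have h4δ : (0:ℝ) ≤ 4 / δ := by positivity
    by_cases hm : δ ^ 2 / 4 ≤ m2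
    · have hc : δ ^ 2 / 4 ≤ g t := by
        have h2 := hg' t
        nlinarith [Real.cos_le_one (t - ψ), sq_nonneg t]
      have h2 := hbnd t _ (by positivity) hc
      rw [show δ ^ 2 / 4 = (δ / 2) ^ 2 by ring, Real.sqrt_sq (by positivity), one_div_div] at h2
      have h3 : 2 / δ ≤ 4 / δ := by
        exact (div_le_div_iff_of_pos_right hδ).2 (by norm_num)
      linarith
    · push_neg at hm
      have h34 : 3 * δ ^ 2 / 4 ≤ 2 * R * (1 - Real.cos ψ) := by linarith
      rcases le_or_gt (|t - ψ|) (3 * π / 2) with hu | hu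
      · have hcu' : ψ ^ 2 ≤ (1 - Real.cos (t - ψ)) * (2 * π ^ 2) := by
          rcases le_or_gt (|t - ψ|) π with hu1 | hu1
          · have hcb := Real.cos_le_one_sub_mul_cos_sq hu1
            have husq : ψ ^ 2 / 4 ≤ (t - ψ) ^ 2 := by
              rw [← sq_abs (t - ψ)]
              nlinarith [abs_nonneg ψ, sq_abs ψ, abs_nonneg (t - ψ)]
            have hcb2 : 2 / π ^ 2 * (t - ψ) ^ 2 ≤ 1 - Real.cos (t - ψ) := by linarith
            rw [div_mul_eq_mul_div, div_le_iff₀ (by positivity)] at hcb2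
            nlinarith [hcb2, husq]
          · have hcn : Real.cos (t - ψ) ≤ 0 := by
              rw [← Real.cos_abs]
              exact Real.cos_nonpos_of_pi_div_two_le_of_le (by linarith) (by linarith)
            have hψsq : ψ ^ 2 ≤ π ^ 2 := by nlinarith [abs_nonneg ψ, sq_abs ψ]
            have hsc : (1:ℝ) * (2 * π ^ 2) ≤ (1 - Real.cos (t - ψ)) * (2 * π ^ 2) :=
              mul_le_mul_of_nonneg_right (by linarith) (by positivity)
            nlinarith [hsc, hψsq]
        have hψ2c : 2 * (1 - Real.cos ψ) ≤ ψ ^ 2 := by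
          nlinarith [Real.one_sub_sq_div_two_le_cos (x := ψ)]
        have hπ2 : π ^ 2 < 12 := by nlinarith [Real.pi_lt_d2, Real.pi_gt_three]
        have hR' : (0:ℝ) ≤ 2 * R := by linarith
        have hc : δ ^ 2 / 16 ≤ g t := by
          have hgt := hg' t
          have k2 : 3 * δ ^ 2 / 4 ≤ R * ψ ^ 2 := by nlinarith
          have k3 : 3 * δ ^ 2 / 4 ≤ 2 * π ^ 2 * (R * (1 - Real.cos (t - ψ))) := by
            nlinarith [mul_le_mul_of_nonneg_left hcu' hR0, k2]
          have k4 : 0 ≤ R * (1 - Real.cos (t - ψ)) :=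
            mul_nonneg hR0 (by linarith [Real.cos_le_one (t - ψ)])
          have k5 : δ ^ 2 / 16 ≤ 2 * (R * (1 - Real.cos (t - ψ))) := by
            nlinarith [mul_le_mul_of_nonneg_right hπ2.le k4]
          nlinarith [sq_nonneg t]
        have h2 := hbnd t _ (by positivity) hc
        rw [show δ ^ 2 / 16 = (δ / 4) ^ 2 by ring, Real.sqrt_sq (by positivity), one_div_div] at h2
        linarith
      · have htabs : π / 2 < |t| := by
          have h1 : |t - ψ| ≤ |t| + |ψ| := abs_sub t ψ
          linarith
        have hc : (1:ℝ) ≤ g t := by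
          have h1 : (π / 2) ^ 2 ≤ t ^ 2 := by
            rw [← sq_abs t]
            exact pow_le_pow_left₀ (by positivity) htabs.le 2
          have hπ2 : (2:ℝ) ≤ π := Real.two_le_pi
          nlinarith [hgt2 t]
        have h2 := hbnd t _ one_pos hc
        rw [Real.sqrt_one] at h2
        linarith
  -- assembly
  set S : Set ℝ := Set.Ioc (-(2 * π)) (2 * π) with hSdef
  have hmB : MeasurableSet B := measurableSet_Ioo
  have hmS : MeasurableSet S := measurableSet_Ioc
  have hIntS : IntegrableOn h S volume := hhc.integrableOn_Ioc
  have hvS : volume S = ENNReal.ofReal (4 * π) := by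
    rw [hSdef, Real.volume_Ioc]
    congr 1
    ring
  have hsplit : ∫ t in S, h t = (∫ t in S \ B, h t) + ∫ t in S ∩ B, h t := by
    rw [← setIntegral_union Set.disjoint_sdiff_inter (hmS.inter hmB)
      (hIntS.mono_set Set.diff_subset) (hIntS.mono_set Set.inter_subset_left),
      Set.diff_union_inter]
  have e1 : (∫ t in S \ B, h t) ≤ (4 / δ + 1) * (4 * π) := by
    have hfin : volume (S \ B) < ⊤ :=
      lt_of_le_of_lt (measure_mono Set.diff_subset) (by rw [hvS]; exact ENNReal.ofReal_lt_top)
    have hb := norm_setIntegral_le_of_norm_le_const hfin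
      (fun t ht => by rw [Real.norm_eq_abs, abs_of_nonneg (hh0 t)]; exact hA t ht)
    have h2 : (volume (S \ B)).toReal ≤ 4 * π := by
      apply ENNReal.toReal_le_of_le_ofReal (by positivity)
      rw [← hvS]
      exact measure_mono Set.diff_subset
    calc (∫ t in S \ B, h t) ≤ ‖∫ t in S \ B, h t‖ := le_abs_self _
      _ ≤ (4 / δ + 1) * (volume (S \ B)).toReal := hb
      _ ≤ (4 / δ + 1) * (4 * π) := by
          apply mul_le_mul_of_nonneg_left h2 (by positivity)
  have e2 : (∫ t in S ∩ B, h t) ≤ 2 := by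
    rcases eq_or_ne ψ 0 with h0 | h0
    · have hBe : B = ∅ := by
        rw [hBdef, h0]
        norm_num
      rw [hBe]
      simp
    · have hψpos : 0 < |ψ| := abs_pos.2 h0
      have hvB : volume B ≤ ENNReal.ofReal |ψ| := by
        rw [hBdef, Real.volume_Ioo, max_sub_min_eq_abs,
          show 3 * ψ / 2 - ψ / 2 = ψ by ring]
      have hfin : volume (S ∩ B) < ⊤ :=
        lt_of_le_of_lt (measure_mono Set.inter_subset_right)
          (lt_of_le_of_lt hvB ENNReal.ofReal_lt_top)
      have hb := norm_setIntegral_le_of_norm_le_const hfin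
        (fun t ht => by rw [Real.norm_eq_abs, abs_of_nonneg (hh0 t)]; exact hB t ht.2)
      have h2 : (volume (S ∩ B)).toReal ≤ |ψ| :=
        ENNReal.toReal_le_of_le_ofReal (abs_nonneg ψ)
          (le_trans (measure_mono Set.inter_subset_right) hvB)
      calc (∫ t in S ∩ B, h t) ≤ ‖∫ t in S ∩ B, h t‖ := le_abs_self _
        _ ≤ (2 / |ψ|) * (volume (S ∩ B)).toReal := hb
        _ ≤ (2 / |ψ|) * |ψ| := by
            apply mul_le_mul_of_nonneg_left h2 (by positivity)
        _ = 2 := by field_simp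
  have hiS : (∫ t in (-(2 * π))..(2 * π), h t) = ∫ t in S, h t := by
    rw [intervalIntegral.integral_of_le (by linarith)]
  calc (∫ t in (-(2 * π))..(2 * π), 1 / Real.sqrt (vnorm (x - vrot t y) ^ 2 + t ^ 2))
      = ∫ t in (-(2 * π))..(2 * π), h t := by simp only [hhdef, hgdef]
    _ = ∫ t in S, h t := hiS
    _ = (∫ t in S \ B, h t) + ∫ t in S ∩ B, h t := hsplit
    _ ≤ (4 / δ + 1) * (4 * π) + 2 := add_le_add e1 e2

/-- away from the diagonal, `K₁` is bounded. -/
theorem stmt_5 : ∀ δ > (0:ℝ), ∃ C > (0:ℝ), ∀ x y : ℝ × ℝ,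
    δ ≤ vnorm (x - y) → K1 x y ≤ C := by
  intro δ hδ
  have hπ : (0:ℝ) < π := Real.pi_pos
  refine ⟨(4 / δ + 1) * (4 * π) + 2, by positivity, ?_⟩
  intro x y hxy
  have hC₀0 : (0:ℝ) ≤ (4 / δ + 1) * (4 * π) + 2 := by positivity
  have hvpos : 0 < vnorm (x - y) := lt_of_lt_of_le hδ hxy
  set h : ℝ → ℝ := fun t => 1 / Real.sqrt (vnorm (x - vrot t y) ^ 2 + t ^ 2) with hhdef
  have hgpos : ∀ t : ℝ, 0 < vnorm (x - vrot t y) ^ 2 + t ^ 2 := by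
    intro t
    rcases eq_or_ne t 0 with rfl | ht
    · rw [vrot_zero]
      have := pow_pos hvpos 2
      simpa using this
    · have h1 : 0 < t ^ 2 := by positivity
      have h2 : 0 ≤ vnorm (x - vrot t y) ^ 2 := sq_nonneg _
      linarith
  have hgc : Continuous fun t : ℝ => vnorm (x - vrot t y) ^ 2 + t ^ 2 := by
    have heq : (fun t : ℝ => vnorm (x - vrot t y) ^ 2 + t ^ 2)
        = fun t : ℝ => (x.1 - (y.1 * Real.cos t + y.2 * Real.sin t)) ^ 2
          + (x.2 - (-y.1 * Real.sin t + y.2 * Real.cos t)) ^ 2 + t ^ 2 := by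
      funext t
      rw [vnorm_sq]
      simp [vrot]
    rw [heq]
    fun_prop
  have hhc : Continuous h := by
    rw [hhdef]
    apply continuous_const.div (Real.continuous_sqrt.comp hgc)
    exact fun t => (Real.sqrt_pos.2 (hgpos t)).ne'
  have hh0 : ∀ t, 0 ≤ h t := fun t => by rw [hhdef]; positivity
  have hint : ∀ a b : ℝ, IntervalIntegrable h volume a b := fun a b =>
    hhc.intervalIntegrable a b
  set H : ℝ → ℝ := fun u => ∫ t in (0:ℝ)..u, h t with hHdef
  have hHc : Continuous H := intervalIntegral.continuous_primitive hint 0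
  set F : ℝ → ℝ := fun a => H (π - a) - H (-π - a) with hFdef
  have hFc : Continuous F :=
    (hHc.comp (by fun_prop)).sub (hHc.comp (by fun_prop))
  have hFval : ∀ a : ℝ, F a = ∫ t in (-π - a)..(π - a), h t := fun a =>
    intervalIntegral.integral_interval_sub_left (hint 0 (π - a)) (hint 0 (-π - a))
  have hFle : ∀ a ∈ Set.Icc (-π) π, F a ≤ (4 / δ + 1) * (4 * π) + 2 := by
    intro a ha
    rw [hFval a]
    calc (∫ t in (-π - a)..(π - a), h t) ≤ ∫ t in (-(2*π))..(2*π), h t := by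
          apply intervalIntegral.integral_mono_interval (by linarith [ha.2])
            (by linarith) (by linarith [ha.1])
            (Filter.Eventually.of_forall fun t => hh0 t) (hint _ _)
      _ ≤ (4 / δ + 1) * (4 * π) + 2 := key_bound hδ x y hxy
  have hinner : ∀ a : ℝ, (∫ b in (-π)..π,
      1 / Real.sqrt (vnorm (vrot a x - vrot b y) ^ 2 + (a - b) ^ 2)) = F a := by
    intro a
    have h1 : (fun b => 1 / Real.sqrt (vnorm (vrot a x - vrot b y) ^ 2 + (a - b) ^ 2))
        = fun b => h (b - a) := by
      funext b
      rw [hhdef]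
      have h2 : vnorm (vrot a x - vrot b y) ^ 2 + (a - b) ^ 2
          = vnorm (x - vrot (b - a) y) ^ 2 + (b - a) ^ 2 := by
        rw [rot_shift]
        ring
      rw [h2]
    rw [h1, intervalIntegral.integral_comp_sub_right h a, hFval a]
  have houter : (∫ a in (-π)..π, ∫ b in (-π)..π,
      1 / Real.sqrt (vnorm (vrot a x - vrot b y) ^ 2 + (a - b) ^ 2))
      ≤ 2 * π * ((4 / δ + 1) * (4 * π) + 2) := by
    calc (∫ a in (-π)..π, ∫ b in (-π)..π,
        1 / Real.sqrt (vnorm (vrot a x - vrot b y) ^ 2 + (a - b) ^ 2))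
        = ∫ a in (-π)..π, F a :=
          intervalIntegral.integral_congr (fun a _ => hinner a)
      _ ≤ ∫ a in (-π)..π, ((4 / δ + 1) * (4 * π) + 2) := by
          apply intervalIntegral.integral_mono_on (by linarith)
            (hFc.intervalIntegrable _ _) intervalIntegrable_const hFle
      _ = 2 * π * ((4 / δ + 1) * (4 * π) + 2) := by
          rw [intervalIntegral.integral_const, smul_eq_mul]
          ring
  unfold K1
  calc (1 / (4 * π)) * (∫ a in (-π)..π, ∫ b in (-π)..π,
      1 / Real.sqrt (vnorm (vrot a x - vrot b y) ^ 2 + (a - b) ^ 2))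
      ≤ (1 / (4 * π)) * (2 * π * ((4 / δ + 1) * (4 * π) + 2)) := by
        apply mul_le_mul_of_nonneg_left houter (by positivity)
    _ = ((4 / δ + 1) * (4 * π) + 2) / 2 := by
        field_simp
        ring
    _ ≤ (4 / δ + 1) * (4 * π) + 2 := by linarith
end

section
/- For every δ > 0 there exists C > 0 such that K₂(x,y) ≤ C ⟨y⟩ for all x, y ∈ ℝ² with |x − y| ≥ δ. -/
open MeasureTheory Real intervalIntegral

/-- The kernel `K₂(x,y) = ∫_{−π}^{π} a² (|x − R_a y|² + a²)^{−3/2} da`. -/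
noncomputable def K2 (x y : ℝ × ℝ) : ℝ :=
  ∫ a in (-π)..π, a ^ 2 / Real.sqrt (vnorm (x - vrot a y) ^ 2 + a ^ 2) ^ 3

lemma vnorm_nonneg (x : ℝ × ℝ) : 0 ≤ vnorm x := Real.sqrt_nonneg _

lemma vnorm_triangle (u v : ℝ × ℝ) : vnorm (u + v) ≤ vnorm u + vnorm v := by
  have h : ∀ w : ℝ × ℝ, vnorm w = ‖(⟨w.1, w.2⟩ : ℂ)‖ := by
    intro w
    rw [Complex.norm_def, Complex.normSq_mk, vnorm]
    ring_nf
  have := norm_add_le (⟨u.1, u.2⟩ : ℂ) ⟨v.1, v.2⟩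
  rw [h, h, h]
  refine le_trans (le_of_eq ?_) this
  congr 1

lemma jap_ge_one (y : ℝ × ℝ) : 1 ≤ jap y := by
  have := Real.sqrt_le_sqrt (show (1:ℝ) ≤ 1 + y.1^2 + y.2^2 by nlinarith [sq_nonneg y.1, sq_nonneg y.2])
  simpa [jap] using this

lemma vnorm_le_jap (y : ℝ × ℝ) : vnorm y ≤ jap y := by
  apply Real.sqrt_le_sqrt; linarith

lemma vrot_sub_self (a : ℝ) (y : ℝ × ℝ) : vnorm (vrot a y - y) ≤ |a| * vnorm y := by
  have h1 : vnorm (vrot a y - y) = Real.sqrt ((y.1^2 + y.2^2) * (2 - 2 * Real.cos a)) := by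
    rw [vnorm]
    congr 1
    simp only [vrot, Prod.fst_sub, Prod.snd_sub]
    have := Real.sin_sq_add_cos_sq a
    ring_nf
    nlinarith [Real.sin_sq_add_cos_sq a]
  have h2 : 2 - 2 * Real.cos a ≤ a ^ 2 := by
    have hs : Real.sin (a/2) ^ 2 ≤ (a/2) ^ 2 := Real.sin_sq_le_sq
    have hc : Real.cos a = 1 - 2 * Real.sin (a/2) ^ 2 := by
      have := Real.cos_sq (a/2)
      rw [show 2*(a/2) = a by ring] at this
      have := Real.sin_sq_add_cos_sq (a/2)
      linarith
    nlinarith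
  rw [h1]
  calc Real.sqrt ((y.1^2 + y.2^2) * (2 - 2 * Real.cos a))
      ≤ Real.sqrt ((y.1^2 + y.2^2) * a^2) := by
        apply Real.sqrt_le_sqrt
        nlinarith [sq_nonneg y.1, sq_nonneg y.2]
    _ = |a| * vnorm y := by
        rw [vnorm, ← Real.sqrt_sq_eq_abs, ← Real.sqrt_mul (by positivity)]
        ring_nf

/-- away from the diagonal, `K₂(x,y) ≤ C ⟨y⟩`. -/
theorem stmt_10 : ∀ δ > (0:ℝ), ∃ C > (0:ℝ), ∀ x y : ℝ × ℝ,
    δ ≤ vnorm (x - y) → K2 x y ≤ C * jap y := by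
  intro δ hδ
  refine ⟨2 * π * (8 * π^2 / δ^3 + 2 / δ), by positivity, ?_⟩
  intro x y hxy
  set t := jap y with ht
  have ht1 : 1 ≤ t := jap_ge_one y
  have htpos : 0 < t := lt_of_lt_of_le one_pos ht1
  -- pointwise bound
  have key : ∀ a ∈ Set.uIoc (-π) π,
      ‖a ^ 2 / Real.sqrt (vnorm (x - vrot a y) ^ 2 + a ^ 2) ^ 3‖
        ≤ (8 * π^2 / δ^3 + 2 / δ) * t := by
    intro a ha
    have hapi : |a| ≤ π := by
      rcases Set.mem_uIoc.mp ha with h | h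
      · rw [abs_le]; exact ⟨le_of_lt h.1, h.2⟩
      · exfalso; linarith [Real.pi_pos, h.1, h.2]
    set s := vnorm (x - vrot a y) with hs
    have hsnn : 0 ≤ s := vnorm_nonneg _
    have hf : a ^ 2 / Real.sqrt (s ^ 2 + a ^ 2) ^ 3
        ≤ (8 * π^2 / δ^3 + 2 / δ) * t := by
      rcases le_or_gt (|a| * t) (δ / 2) with hcase | hcase
      · -- small a: s ≥ δ/2
        have hsy : vnorm (vrot a y - y) ≤ δ / 2 := by
          calc vnorm (vrot a y - y) ≤ |a| * vnorm y := vrot_sub_self a y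
            _ ≤ |a| * t := by
                exact mul_le_mul_of_nonneg_left (vnorm_le_jap y) (abs_nonneg a)
            _ ≤ δ / 2 := hcase
        have htr : vnorm (x - y) ≤ s + vnorm (vrot a y - y) := by
          have : x - y = (x - vrot a y) + (vrot a y - y) := by abel
          rw [this]; exact vnorm_triangle _ _
        have hsge : δ / 2 ≤ s := by linarith
        have hsq : Real.sqrt (s ^ 2 + a ^ 2) ^ 3 ≥ (δ/2) ^ 3 := by
          calc (δ/2)^3 ≤ s ^ 3 := by
                apply pow_le_pow_left₀ (by positivity) hsge
            _ ≤ Real.sqrt (s ^ 2 + a ^ 2) ^ 3 := by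
                apply pow_le_pow_left₀ hsnn
                rw [show s = Real.sqrt (s^2) by rw [Real.sqrt_sq hsnn]]
                apply Real.sqrt_le_sqrt
                nlinarith [sq_nonneg a, Real.sq_sqrt (by positivity : (0:ℝ) ≤ s^2)]
        have hd3 : (0:ℝ) < (δ/2)^3 := by positivity
        calc a ^ 2 / Real.sqrt (s ^ 2 + a ^ 2) ^ 3
            ≤ a ^ 2 / (δ/2)^3 := by
              apply div_le_div_of_nonneg_left (sq_nonneg a) hd3 hsq
          _ ≤ π ^ 2 / (δ/2)^3 := by
              apply (div_le_div_iff_of_pos_right hd3).mpr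
              calc a^2 = |a|^2 := (sq_abs a).symm
                _ ≤ π^2 := by nlinarith [abs_nonneg a, Real.pi_pos]
          _ = 8 * π^2 / δ^3 := by ring
          _ ≤ (8 * π^2 / δ^3) * t := by
              nlinarith [div_nonneg (by positivity : (0:ℝ) ≤ 8*π^2) (by positivity : (0:ℝ) ≤ δ^3)]
          _ ≤ (8 * π^2 / δ^3 + 2 / δ) * t := by
              have : (0:ℝ) ≤ 2/δ := by positivity
              nlinarith
      · -- large a: use denominator ≥ |a|³
        have ha0 : 0 < |a| := by
          by_contra h
          push_neg at h
          have : |a| = 0 := le_antisymm h (abs_nonneg a)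
          rw [this] at hcase; simp at hcase; linarith
        have hsq : |a| ^ 3 ≤ Real.sqrt (s ^ 2 + a ^ 2) ^ 3 := by
          apply pow_le_pow_left₀ (abs_nonneg a)
          rw [show |a| = Real.sqrt (a^2) by rw [Real.sqrt_sq_eq_abs]]
          apply Real.sqrt_le_sqrt; nlinarith
        calc a ^ 2 / Real.sqrt (s ^ 2 + a ^ 2) ^ 3
            ≤ a ^ 2 / |a| ^ 3 := by
              apply div_le_div_of_nonneg_left (sq_nonneg a) (by positivity) hsq
          _ = 1 / |a| := by
              have ha' : a ≠ 0 := abs_pos.mp ha0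
              rw [show |a|^3 = a^2*|a| by rw [pow_succ, sq_abs],
                div_mul_cancel_left₀ (pow_ne_zero 2 ha'), one_div]
          _ ≤ 2 * t / δ := by
              rw [div_le_div_iff₀ ha0 hδ]
              nlinarith
          _ = (2 / δ) * t := by ring
          _ ≤ (8 * π^2 / δ^3 + 2 / δ) * t := by
              have : (0:ℝ) ≤ 8*π^2/δ^3 := by positivity
              nlinarith
    have hfnn : 0 ≤ a ^ 2 / Real.sqrt (s ^ 2 + a ^ 2) ^ 3 := by positivity
    rw [Real.norm_eq_abs, abs_of_nonneg hfnn]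
    exact hf
  have hbound := intervalIntegral.norm_integral_le_of_norm_le_const key
  rw [K2]
  calc (∫ a in (-π)..π, a ^ 2 / Real.sqrt (vnorm (x - vrot a y) ^ 2 + a ^ 2) ^ 3)
      ≤ ‖∫ a in (-π)..π, a ^ 2 / Real.sqrt (vnorm (x - vrot a y) ^ 2 + a ^ 2) ^ 3‖ :=
        le_abs_self _
    _ ≤ (8 * π^2 / δ^3 + 2 / δ) * t * |π - (-π)| := hbound
    _ = 2 * π * (8 * π^2 / δ^3 + 2 / δ) * t := by
        rw [show |π - (-π)| = 2*π by rw [abs_of_nonneg (by linarith [Real.pi_pos])]; ring]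
        ring
end
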